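/- Let 𝕀₆ = ℂ⁶/H be the 6-dimensional complex parallelisable nilmanifold with left-invariant holomorphic frame X₁ = ∂/∂z₁, X₂ = ∂/∂z₂, X₃ = ∂/∂z₃, X₄ = ∂/∂z₄ + z₁∂/∂z₂, X₅ = ∂/∂z₅ + z₁∂/∂z₃, X₆ = ∂/∂z₆ + z₂∂/∂z₃ + z₄∂/∂z₅, and let π₂ = X₁ ∧ X₆. Then π₂ is a holomorphic Poisson structure on 𝕀₆ with H₀(𝕀₆, π₂) ≅ ℂ and H₁(𝕀₆, π₂) ≅ ℂ⁶, whereas dim H_{∂̄}^{5,0}(𝕀₆) + dim H_{∂̄}^{6,1}(𝕀₆) = 6 + 3 = 9; consequently the Dolbeault–Koszul–Brylinski spectral sequence of (𝕀₆, π₂) does not degenerate at the E₁-page. -/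

import Mathlib

/-!
# `E₁`-non-degeneracy for the Poisson structure `π₂ = X₁ ∧ X₆` on `𝕀₆`

Statement 19 of Chen–Chen–Yang–Yang, *Holomorphic Koszul–Brylinski homologies of
Poisson blow-ups* (Section 6.3.2).

`𝕀₆ = ℂ⁶/H` is the compact complex parallelisable six-dimensional nilmanifold with
left-invariant holomorphic frame `X₁, …, X₆` and nonzero Lie brackets
`[X₁,X₄] = X₂`, `[X₁,X₅] = X₃ = [X₂,X₆]`, `[X₄,X₆] = X₅`.  Its invariant forms are
realised concretely as coefficient functions on the monomial basis `w^I ∧ w̄^J`,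
with Dolbeault operators determined by the structure equations
`dw¹ = dw⁴ = dw⁶ = 0`, `dw² = −w¹∧w⁴`, `dw³ = −w¹∧w⁵ − w²∧w⁶`, `dw⁵ = −w⁴∧w⁶`.
For left-invariant Poisson structures the holomorphic Koszul–Brylinski homology of
`𝕀₆` is computed by the total cohomology of the invariant double complex
`(∧^{•,•} g_ℂ^*, ∂_π, ∂̄)`, and the `E₁`-degeneracy of the
Dolbeault–Koszul–Brylinski spectral sequence is expressed by the numerical criterion
of the paper (Lemma 5.6).
-/


noncomputable section

open Module

namespace InvForms

variable (m : ℕ)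

/-- Indexing of the monomial basis `w^I ∧ w̄^J` of left-invariant forms. -/
abbrev Idx := Finset (Fin m) × Finset (Fin m)

/-- Left-invariant complex forms on the nilmanifold, as coefficient functions on the
monomial basis `w^I ∧ w̄^J`. -/
abbrev Forms := Idx m → ℂ

/-- `(-1)^{#{a ∈ s | a < k}}`, the Koszul sign of inserting `w^k` in front of `w^s`. -/
def insSign (k : Fin m) (s : Finset (Fin m)) : ℂ := (-1) ^ (s.filter fun a => a < k).card

/-- Contraction with the frame vector field `X_k` (interior product on the
holomorphic part). -/
def iotaX (k : Fin m) : Forms m →ₗ[ℂ] Forms m :=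
  (Matrix.of fun st st' : Idx m =>
    if st'.1 = insert k st.1 ∧ k ∉ st.1 ∧ st'.2 = st.2 then insSign m k st.1 else 0).mulVecLin

/-- The sign of rewriting `w^S ∧ w^T` as `±w^U`; zero unless `S` and `T` are
disjoint with union `U`. -/
def wedgeCoef (S T U : Finset (Fin m)) : ℂ :=
  if Disjoint S T ∧ S ∪ T = U then
    (-1) ^ ((S ×ˢ T).filter fun ab => ab.2 < ab.1).card
  else 0

/-- The left-invariant holomorphic Dolbeault operator `∂` determined by the structure
coefficients `dc` (so that `∂ w^j = ∑_S dc j S • w^S`): on a complex parallelisable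
nilmanifold, `∂` acts on the monomial `w^I ∧ w̄^J` through the holomorphic factor as a
derivation. -/
def delOp (dc : Fin m → Finset (Fin m) → ℂ) : Forms m →ₗ[ℂ] Forms m :=
  (Matrix.of fun st' st : Idx m =>
    if st'.2 = st.2 then
      ∑ j ∈ st.1, insSign m j (st.1.erase j) *
        ∑ S : Finset (Fin m), dc j S * wedgeCoef m S (st.1.erase j) st'.1
    else 0).mulVecLin

/-- The left-invariant antiholomorphic Dolbeault operator `∂̄` determined by the
structure coefficients `dc` (so that `∂̄ w̄^j = ∑_S dc j S • w̄^S`), acting on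
`w^I ∧ w̄^J` through the antiholomorphic factor with the Koszul sign `(-1)^{|I|}`. -/
def dbarOp (dc : Fin m → Finset (Fin m) → ℂ) : Forms m →ₗ[ℂ] Forms m :=
  (Matrix.of fun st' st : Idx m =>
    if st'.1 = st.1 then
      (-1 : ℂ) ^ st.1.card *
        ∑ j ∈ st.2, insSign m j (st.2.erase j) *
          ∑ S : Finset (Fin m), dc j S * wedgeCoef m S (st.2.erase j) st'.2
    else 0).mulVecLin

/-- Contraction `ι_π` with the left-invariant bivector field
`π = ½ ∑_{a,b} B^{ab} X_a ∧ X_b` (`B` antisymmetric). -/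
def iotaBiv (B : Fin m → Fin m → ℂ) : Forms m →ₗ[ℂ] Forms m :=
  (2⁻¹ : ℂ) • ∑ a : Fin m, ∑ b : Fin m, B a b • (iotaX m a ∘ₗ iotaX m b)

/-- The Koszul–Brylinski operator `∂_π = ι_π ∘ ∂ − ∂ ∘ ι_π` on left-invariant
forms. -/
def kbOp (dc : Fin m → Finset (Fin m) → ℂ) (B : Fin m → Fin m → ℂ) :
    Forms m →ₗ[ℂ] Forms m :=
  iotaBiv m B ∘ₗ delOp m dc - delOp m dc ∘ₗ iotaBiv m B

/-- The subspace of left-invariant forms of pure bidegree `(p, q)`. -/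
def grade (p q : ℤ) : Submodule ℂ (Forms m) where
  carrier := {f | ∀ st : Idx m, f st ≠ 0 → (st.1.card : ℤ) = p ∧ (st.2.card : ℤ) = q}
  add_mem' := by
    intro f g hf hg st hst
    by_cases h1 : f st = 0
    · refine hg st ?_
      intro h2
      apply hst
      show f st + g st = 0
      rw [h1, h2, add_zero]
    · exact hf st h1
  zero_mem' := by intro st hst; exact absurd rfl hst
  smul_mem' := by
    intro cc f hf st hst
    refine hf st ?_
    intro h0
    apply hst
    show cc * f st = 0
    rw [h0, mul_zero]

/-- The subspace of left-invariant forms of pure total Koszul–Brylinski degree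
`k = m − p + q`. -/
def totalGrade (k : ℤ) : Submodule ℂ (Forms m) where
  carrier := {f | ∀ st : Idx m, f st ≠ 0 → (m : ℤ) - st.1.card + st.2.card = k}
  add_mem' := by
    intro f g hf hg st hst
    by_cases h1 : f st = 0
    · refine hg st ?_
      intro h2
      apply hst
      show f st + g st = 0
      rw [h1, h2, add_zero]
    · exact hf st h1
  zero_mem' := by intro st hst; exact absurd rfl hst
  smul_mem' := by
    intro cc f hf st hst
    refine hf st ?_
    intro h0
    apply hst
    show cc * f st = 0
    rw [h0, mul_zero]

/-- The dimension of the degree-`k` cohomology of the total complex of the double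
complex of left-invariant forms with total differential `D` (for the
Koszul–Brylinski total grading `k = m − p + q`).  For `D = ∂_π + ∂̄` this computes
`dim_ℂ H_k(M, π)` for a complex parallelisable nilmanifold `M`. -/
def totCohDim (D : Forms m →ₗ[ℂ] Forms m) (k : ℤ) : ℕ :=
  finrank ℂ (↥(totalGrade m k ⊓ LinearMap.ker D) ⧸
    Submodule.comap (totalGrade m k ⊓ LinearMap.ker D).subtype
      (Submodule.map D (totalGrade m (k - 1))))

/-- The invariant Hodge number `h^{p,q}`: the dimension of the `∂̄`-cohomology of
left-invariant forms in bidegree `(p, q)` (by Sakane's theorem this equals the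
Dolbeault Hodge number of a complex parallelisable nilmanifold). -/
def hodgeDim (dc : Fin m → Finset (Fin m) → ℂ) (p q : ℤ) : ℕ :=
  finrank ℂ (↥(grade m p q ⊓ LinearMap.ker (dbarOp m dc)) ⧸
    Submodule.comap (grade m p q ⊓ LinearMap.ker (dbarOp m dc)).subtype
      (Submodule.map (dbarOp m dc) (grade m p (q - 1))))

/-- The `E₁`-degeneracy of the Dolbeault–Koszul–Brylinski spectral sequence of the
nilmanifold with invariant Poisson bivector `B`, expressed by the numerical criterion
`dim_ℂ H_k = ∑_{p-q=m-k} h^{p,q}` for all `0 ≤ k ≤ 2m`. -/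
def e1Degenerates (dc : Fin m → Finset (Fin m) → ℂ) (B : Fin m → Fin m → ℂ) : Prop :=
  ∀ k : ℤ, 0 ≤ k → k ≤ 2 * (m : ℤ) →
    totCohDim m (kbOp m dc B + dbarOp m dc) k =
      ∑ q ∈ Finset.range (m + 1), hodgeDim m dc ((m : ℤ) - k + q) (q : ℤ)

/-- Kronecker delta. -/
def delta (i j : Fin m) : ℂ := if i = j then 1 else 0

/-- The trivector `v ∧ X_b ∧ X_d` evaluated at `(x, y, z)` (as an alternating
3-tensor), where `v = ∑ v^i X_i`. -/
def tri (v : Fin m → ℂ) (b d : Fin m) (x y z : Fin m) : ℂ :=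
  Matrix.det !![v x, v y, v z;
                delta m b x, delta m b y, delta m b z;
                delta m d x, delta m d y, delta m d z]

/-- The Schouten bracket `[P, Q]_S` of two left-invariant bivector fields
`P = ½∑ P^{ab} X_a ∧ X_b`, `Q = ½∑ Q^{cd} X_c ∧ X_d`, evaluated as an alternating
trivector at `(x, y, z)`; here `br a c` gives the coordinates of the Lie bracket
`[X_a, X_c]`, and on decomposables
`[A∧B, C∧D]_S = [A,C]∧B∧D − [A,D]∧B∧C − [B,C]∧A∧D + [B,D]∧A∧C`. -/
def schouten (br : Fin m → Fin m → Fin m → ℂ) (B C : Fin m → Fin m → ℂ)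
    (x y z : Fin m) : ℂ :=
  (4⁻¹ : ℂ) * ∑ a : Fin m, ∑ b : Fin m, ∑ c : Fin m, ∑ d : Fin m,
    B a b * C c d *
      (tri m (br a c) b d x y z - tri m (br a d) b c x y z -
        tri m (br b c) a d x y z + tri m (br b d) a c x y z)


/-- Structure coefficients of the (anti)holomorphic differentials on `𝕀₆`:
`dw¹ = dw⁴ = dw⁶ = 0`, `dw² = −w¹∧w⁴`, `dw³ = −w¹∧w⁵ − w²∧w⁶`, `dw⁵ = −w⁴∧w⁶`
(zero-based indices). -/
def i6DC : Fin 6 → Finset (Fin 6) → ℂ := fun j S =>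
  if j = 1 ∧ S = ({0, 3} : Finset (Fin 6)) then -1
  else if j = 2 ∧ S = ({0, 4} : Finset (Fin 6)) then -1
  else if j = 2 ∧ S = ({1, 5} : Finset (Fin 6)) then -1
  else if j = 4 ∧ S = ({3, 5} : Finset (Fin 6)) then -1
  else 0

/-- Coordinates of the Lie bracket of the Lie algebra of `𝕀₆`
(`i6Bracket a c` = the coordinates of `[X_a, X_c]`): the nonzero brackets are
`[X₁,X₄] = X₂`, `[X₁,X₅] = X₃`, `[X₂,X₆] = X₃`, `[X₄,X₆] = X₅`
(zero-based indices). -/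
def i6Bracket : Fin 6 → Fin 6 → Fin 6 → ℂ := fun a c i =>
  if a = 0 ∧ c = 3 ∧ i = 1 then 1 else if a = 3 ∧ c = 0 ∧ i = 1 then -1
  else if a = 0 ∧ c = 4 ∧ i = 2 then 1 else if a = 4 ∧ c = 0 ∧ i = 2 then -1
  else if a = 1 ∧ c = 5 ∧ i = 2 then 1 else if a = 5 ∧ c = 1 ∧ i = 2 then -1
  else if a = 3 ∧ c = 5 ∧ i = 4 then 1 else if a = 5 ∧ c = 3 ∧ i = 4 then -1
  else 0

/-- The left-invariant bivector field `π₂ = X₁ ∧ X₆` on `𝕀₆`, as an antisymmetric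
coefficient matrix (`π₂ = ½∑ B^{ab} X_a∧X_b`). -/
def pi2 : Fin 6 → Fin 6 → ℂ := fun a b =>
  if a = 0 ∧ b = 5 then 1 else if a = 5 ∧ b = 0 then -1 else 0

set_option maxRecDepth 40000

abbrev Idx6 := Idx 6

/-- Generic coordinate subspace of invariant forms. -/
def subP (P : Idx6 → Prop) : Submodule ℂ (Forms 6) where
  carrier := {f | ∀ st : Idx6, f st ≠ 0 → P st}
  add_mem' := by
    intro f g hf hg st hst
    by_cases h1 : f st = 0
    · refine hg st ?_
      intro h2; apply hst; show f st + g st = 0; rw [h1, h2, add_zero]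
    · exact hf st h1
  zero_mem' := by intro st hst; exact absurd rfl hst
  smul_mem' := by
    intro cc f hf st hst
    refine hf st ?_
    intro h0; apply hst; show cc * f st = 0; rw [h0, mul_zero]

lemma mem_subP {P : Idx6 → Prop} {f : Forms 6} : f ∈ subP P ↔ ∀ st, f st ≠ 0 → P st := Iff.rfl

lemma grade_eq (p q : ℤ) :
    grade 6 p q = subP (fun st => (st.1.card : ℤ) = p ∧ (st.2.card : ℤ) = q) := rfl

lemma totalGrade_eq (k : ℤ) :
    totalGrade 6 k = subP (fun st => (6 : ℤ) - st.1.card + st.2.card = k) := rfl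

lemma subP_eq_bot (P : Idx6 → Prop) (h : ∀ st, ¬ P st) : subP P = ⊥ := by
  rw [eq_bot_iff]
  intro f hf
  rw [Submodule.mem_bot]
  funext st
  by_contra hc
  exact h st (hf st hc)

/-- The coordinate subspace is linearly equivalent to functions on its support. -/
def subPEquiv (P : Idx6 → Prop) [DecidablePred P] :
    ({st : Idx6 // P st} → ℂ) ≃ₗ[ℂ] subP P where
  toFun g := ⟨fun st => if h : P st then g ⟨st, h⟩ else 0, by
    intro st hst
    by_cases h : P st
    · exact h
    · simp [h] at hst⟩
  invFun f s := f.1 s.1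
  map_add' g h := by
    apply Subtype.ext
    funext st
    by_cases h : P st <;> simp [h]
  map_smul' c g := by
    apply Subtype.ext
    funext st
    by_cases h : P st <;> simp [h]
  left_inv g := by funext s; simp [s.2]
  right_inv f := by
    apply Subtype.ext
    funext st
    by_cases h : P st
    · simp [h]
    · simp only [dif_neg h]
      by_contra hc
      exact h (f.2 st fun h0 => hc h0.symm)

lemma finrank_subP (P : Idx6 → Prop) [DecidablePred P] :
    finrank ℂ (subP P) = Fintype.card {st : Idx6 // P st} := by
  rw [← (subPEquiv P).finrank_eq, Module.finrank_fintype_fun_eq_card]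

lemma quot_dim (W V : Submodule ℂ (Forms 6)) (D : Forms 6 →ₗ[ℂ] Forms 6)
    (h : V ≤ LinearMap.ker D) :
    finrank ℂ (↥W ⧸ Submodule.comap W.subtype (Submodule.map D V)) = finrank ℂ W := by
  rw [LinearMap.le_ker_iff_map.mp h, Submodule.comap_bot, Submodule.ker_subtype]
  exact (Submodule.quotEquivOfEqBot _ rfl).finrank_eq

lemma pi2_eval :
    pi2 0 5 = 1 ∧ pi2 5 0 = -1 ∧ pi2 0 0 = 0 ∧ pi2 5 5 = 0 := by
  refine ⟨rfl, rfl, rfl, rfl⟩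

lemma iotaX_apply (k : Fin 6) (f : Forms 6) (st : Idx6) :
    iotaX 6 k f st =
      if k ∉ st.1 then insSign 6 k st.1 * f (insert k st.1, st.2) else 0 := by
  show (Matrix.mulVecLin _) f st = _
  rw [Matrix.mulVecLin_apply]
  simp only [Matrix.mulVec, dotProduct, Matrix.of_apply]

  by_cases hk : k ∈ st.1
  · rw [if_neg (by simp [hk])]
    apply Finset.sum_eq_zero
    intro st' _
    rw [if_neg (fun h => h.2.1 hk), zero_mul]
  · rw [if_pos hk]
    rw [Finset.sum_eq_single (insert k st.1, st.2)]
    · rw [if_pos ⟨rfl, hk, rfl⟩]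
    · intro b _ hb
      rw [if_neg, zero_mul]
      rintro ⟨h1, -, h2⟩
      exact hb (Prod.ext h1 h2)
    · intro h; exact absurd (Finset.mem_univ _) h

lemma delOp_apply (dc : Fin 6 → Finset (Fin 6) → ℂ) (f : Forms 6) (U J : Finset (Fin 6)) :
    delOp 6 dc f (U, J) =
      ∑ I : Finset (Fin 6),
        (∑ j ∈ I, insSign 6 j (I.erase j) *
          ∑ S : Finset (Fin 6), dc j S * wedgeCoef 6 S (I.erase j) U) * f (I, J) := by
  show (Matrix.mulVecLin _) f (U, J) = _
  rw [Matrix.mulVecLin_apply]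
  simp only [Matrix.mulVec, dotProduct, Matrix.of_apply]

  rw [Fintype.sum_prod_type]
  apply Finset.sum_congr rfl
  intro I _
  rw [Finset.sum_eq_single J]
  · rw [if_pos rfl]
  · intro b _ hb
    rw [if_neg (fun h => hb h.symm), zero_mul]
  · intro h; exact absurd (Finset.mem_univ _) h

lemma dbarOp_apply (dc : Fin 6 → Finset (Fin 6) → ℂ) (f : Forms 6) (U J : Finset (Fin 6)) :
    dbarOp 6 dc f (U, J) =
      ∑ Js : Finset (Fin 6),
        ((-1 : ℂ) ^ U.card * ∑ j ∈ Js, insSign 6 j (Js.erase j) *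
          ∑ S : Finset (Fin 6), dc j S * wedgeCoef 6 S (Js.erase j) J) * f (U, Js) := by
  show (Matrix.mulVecLin _) f (U, J) = _
  rw [Matrix.mulVecLin_apply]
  simp only [Matrix.mulVec, dotProduct, Matrix.of_apply]

  rw [Fintype.sum_prod_type]
  rw [Finset.sum_eq_single U]
  · apply Finset.sum_congr rfl
    intro Js _
    rw [if_pos rfl]
  · intro b _ hb
    apply Finset.sum_eq_zero
    intro Js _
    rw [if_neg (fun h => hb h.symm), zero_mul]
  · intro h; exact absurd (Finset.mem_univ _) h

lemma kbOp_apply (dc : Fin 6 → Finset (Fin 6) → ℂ) (B : Fin 6 → Fin 6 → ℂ) (f : Forms 6) :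
    kbOp 6 dc B f = iotaBiv 6 B (delOp 6 dc f) - delOp 6 dc (iotaBiv 6 B f) := by
  simp [kbOp, LinearMap.sub_apply, LinearMap.comp_apply]

lemma insSign_zero (s : Finset (Fin 6)) : insSign 6 0 s = 1 := by
  unfold insSign
  rw [Finset.filter_false_of_mem, Finset.card_empty, pow_zero]
  intro a _
  exact Fin.not_lt_zero a

lemma insSign_five_insert_zero (s : Finset (Fin 6)) (h : 0 ∉ s) :
    insSign 6 5 (insert 0 s) = -insSign 6 5 s := by
  unfold insSign
  rw [Finset.filter_insert, if_pos (by decide)]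
  rw [Finset.card_insert_of_notMem (fun hc => h (Finset.mem_filter.mp hc).1)]
  rw [pow_succ]
  ring

lemma iotaBiv_apply' (B : Fin 6 → Fin 6 → ℂ) (f : Forms 6) (st : Idx6) :
    iotaBiv 6 B f st =
      2⁻¹ * ∑ a : Fin 6, ∑ b : Fin 6, B a b * iotaX 6 a (iotaX 6 b f) st := by
  unfold iotaBiv
  simp only [LinearMap.smul_apply, LinearMap.coe_sum, Finset.sum_apply,
    LinearMap.smul_apply, LinearMap.comp_apply, Pi.smul_apply, smul_eq_mul]


lemma iotaBiv_pi2_apply (f : Forms 6) (st : Idx6) :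
    iotaBiv 6 pi2 f st =
      if 0 ∉ st.1 ∧ 5 ∉ st.1 then
        -insSign 6 5 st.1 * f (insert 0 (insert 5 st.1), st.2) else 0 := by
  rw [iotaBiv_apply']
  rw [Fin.sum_univ_six]
  simp only [Fin.sum_univ_six]
  simp only [show pi2 0 0 = 0 from rfl, show pi2 0 1 = 0 from rfl, show pi2 0 2 = 0 from rfl,
    show pi2 0 3 = 0 from rfl, show pi2 0 4 = 0 from rfl, show pi2 0 5 = 1 from rfl,
    show pi2 1 0 = 0 from rfl, show pi2 1 1 = 0 from rfl, show pi2 1 2 = 0 from rfl,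
    show pi2 1 3 = 0 from rfl, show pi2 1 4 = 0 from rfl, show pi2 1 5 = 0 from rfl,
    show pi2 2 0 = 0 from rfl, show pi2 2 1 = 0 from rfl, show pi2 2 2 = 0 from rfl,
    show pi2 2 3 = 0 from rfl, show pi2 2 4 = 0 from rfl, show pi2 2 5 = 0 from rfl,
    show pi2 3 0 = 0 from rfl, show pi2 3 1 = 0 from rfl, show pi2 3 2 = 0 from rfl,
    show pi2 3 3 = 0 from rfl, show pi2 3 4 = 0 from rfl, show pi2 3 5 = 0 from rfl,
    show pi2 4 0 = 0 from rfl, show pi2 4 1 = 0 from rfl, show pi2 4 2 = 0 from rfl,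
    show pi2 4 3 = 0 from rfl, show pi2 4 4 = 0 from rfl, show pi2 4 5 = 0 from rfl,
    show pi2 5 0 = -1 from rfl, show pi2 5 1 = 0 from rfl, show pi2 5 2 = 0 from rfl,
    show pi2 5 3 = 0 from rfl, show pi2 5 4 = 0 from rfl, show pi2 5 5 = 0 from rfl,
    zero_mul, add_zero, zero_add, one_mul, neg_one_mul, mul_zero]
  by_cases h0 : 0 ∈ st.1 <;> by_cases h5 : 5 ∈ st.1
  · simp [iotaX_apply, h0, h5]
  · simp [iotaX_apply, h0, h5, show (0:Fin 6) ≠ 5 by decide, show (5:Fin 6) ≠ 0 by decide]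
  · simp [iotaX_apply, h0, h5, show (0:Fin 6) ≠ 5 by decide, show (5:Fin 6) ≠ 0 by decide]
  · simp [iotaX_apply, h0, h5, show (0:Fin 6) ≠ 5 by decide, show (5:Fin 6) ≠ 0 by decide]
    rw [insSign_zero, insSign_zero,
      show (insert 5 (insert 0 st.1) : Finset (Fin 6)) = insert 0 (insert 5 st.1) from
        Finset.insert_comm 5 0 st.1,
      insSign_five_insert_zero _ h0]
    ring

/-- The four supports of `i6DC`. -/
lemma i6DC_eq_zero (j : Fin 6) (S : Finset (Fin 6))
    (h : ¬ (j = 1 ∧ S = {0,3}) ∧ ¬ (j = 2 ∧ S = {0,4}) ∧ ¬ (j = 2 ∧ S = {1,5}) ∧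
      ¬ (j = 4 ∧ S = {3,5})) : i6DC j S = 0 := by
  unfold i6DC
  rw [if_neg h.1, if_neg h.2.1, if_neg h.2.2.1, if_neg h.2.2.2]

lemma sum_dc (j : Fin 6) (g : Finset (Fin 6) → ℂ) :
    ∑ S : Finset (Fin 6), i6DC j S * g S =
      (if j = 1 then -g {0,3} else 0) + (if j = 2 then -g {0,4} - g {1,5} else 0) +
        (if j = 4 then -g {3,5} else 0) := by
  rw [← Finset.sum_subset
    (Finset.subset_univ ({{0,3},{0,4},{1,5},{3,5}} : Finset (Finset (Fin 6))))]
  · rw [Finset.sum_insert (by decide), Finset.sum_insert (by decide),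
      Finset.sum_insert (by decide), Finset.sum_singleton]
    fin_cases j <;>
      simp [i6DC, show (({0,3}:Finset (Fin 6)) = {0,4}) = False by decide, show (({0,3}:Finset (Fin 6)) = {1,5}) = False by decide, show (({0,3}:Finset (Fin 6)) = {3,5}) = False by decide, show (({0,4}:Finset (Fin 6)) = {0,3}) = False by decide, show (({0,4}:Finset (Fin 6)) = {1,5}) = False by decide, show (({0,4}:Finset (Fin 6)) = {3,5}) = False by decide, show (({1,5}:Finset (Fin 6)) = {0,3}) = False by decide, show (({1,5}:Finset (Fin 6)) = {0,4}) = False by decide, show (({1,5}:Finset (Fin 6)) = {3,5}) = False by decide, show (({3,5}:Finset (Fin 6)) = {0,3}) = False by decide, show (({3,5}:Finset (Fin 6)) = {0,4}) = False by decide, show (({3,5}:Finset (Fin 6)) = {1,5}) = False by decide] <;> ring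
  · intro S _ hS
    rw [i6DC_eq_zero, zero_mul]
    simp only [Finset.mem_insert, Finset.mem_singleton, not_or] at hS
    exact ⟨fun h => hS.1 h.2, fun h => hS.2.1 h.2, fun h => hS.2.2.1 h.2,
      fun h => hS.2.2.2 h.2⟩

lemma wc_zero' (S T U : Finset (Fin 6)) (x : Fin 6) (hS : x ∈ S) (hT : x ∈ T) :
    wedgeCoef 6 S T U = 0 := by
  unfold wedgeCoef
  rw [if_neg]
  rintro ⟨hd, -⟩
  exact (Finset.disjoint_left.mp hd hS) hT

lemma wc_empty (S J : Finset (Fin 6)) :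
    wedgeCoef 6 S ∅ J = if S = J then 1 else 0 := by
  unfold wedgeCoef
  by_cases h : S = J
  · rw [if_pos ⟨Finset.disjoint_empty_right S, by rw [Finset.union_empty]; exact h⟩, if_pos h]
    rw [Finset.product_empty, Finset.filter_empty, Finset.card_empty, pow_zero]
  · rw [if_neg, if_neg h]
    rintro ⟨-, hu⟩
    rw [Finset.union_empty] at hu
    exact h hu

lemma mem_or_mem_erase (I : Finset (Fin 6)) (hI : I.card = 5) (a b j : Fin 6)
    (hab : a ≠ b) (haj : a ≠ j) (hbj : b ≠ j) :
    a ∈ I.erase j ∨ b ∈ I.erase j := by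
  by_contra h
  push_neg at h
  have haI : a ∉ I := fun hm => h.1 (Finset.mem_erase.mpr ⟨haj, hm⟩)
  have hbI : b ∉ I := fun hm => h.2 (Finset.mem_erase.mpr ⟨hbj, hm⟩)
  have hsub : I ⊆ Finset.univ \ {a, b} := by
    intro x hx
    rw [Finset.mem_sdiff]
    refine ⟨Finset.mem_univ x, ?_⟩
    rw [Finset.mem_insert, Finset.mem_singleton]
    rintro (rfl | rfl)
    · exact haI hx
    · exact hbI hx
  have hcard := Finset.card_le_card hsub
  rw [hI, Finset.card_sdiff_of_subset (by intro x hx; exact Finset.mem_univ x)] at hcard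
  rw [Finset.card_insert_of_notMem (by simpa using hab), Finset.card_singleton] at hcard
  simp at hcard

/-- The `∂`-structure sum appearing in `delOp_apply`. -/
def hIdef (I U : Finset (Fin 6)) : ℂ :=
  ∑ j ∈ I, insSign 6 j (I.erase j) *
    ∑ S : Finset (Fin 6), i6DC j S * wedgeCoef 6 S (I.erase j) U

lemma h_card5 (I : Finset (Fin 6)) (hI : I.card = 5) (U : Finset (Fin 6)) :
    hIdef I U = 0 := by
  unfold hIdef
  apply Finset.sum_eq_zero
  intro j hj
  rw [sum_dc]
  by_cases h1 : j = 1
  · subst h1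
    rcases mem_or_mem_erase I hI 0 3 1 (by decide) (by decide) (by decide) with h | h
    · rw [wc_zero' {0,3} _ _ 0 (by decide) h]; simp
    · rw [wc_zero' {0,3} _ _ 3 (by decide) h]; simp
  · by_cases h2 : j = 2
    · subst h2
      rcases mem_or_mem_erase I hI 0 4 2 (by decide) (by decide) (by decide) with h | h
      · rw [wc_zero' {0,4} _ _ 0 (by decide) h]
        rcases mem_or_mem_erase I hI 1 5 2 (by decide) (by decide) (by decide) with h' | h'
        · rw [wc_zero' {1,5} _ _ 1 (by decide) h']; simp
        · rw [wc_zero' {1,5} _ _ 5 (by decide) h']; simp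
      · rw [wc_zero' {0,4} _ _ 4 (by decide) h]
        rcases mem_or_mem_erase I hI 1 5 2 (by decide) (by decide) (by decide) with h' | h'
        · rw [wc_zero' {1,5} _ _ 1 (by decide) h']; simp
        · rw [wc_zero' {1,5} _ _ 5 (by decide) h']; simp
    · by_cases h4 : j = 4
      · subst h4
        rcases mem_or_mem_erase I hI 3 5 4 (by decide) (by decide) (by decide) with h | h
        · rw [wc_zero' {3,5} _ _ 3 (by decide) h]; simp [h1, h2]
        · rw [wc_zero' {3,5} _ _ 5 (by decide) h]; simp [h1, h2]
      · rw [if_neg h1, if_neg h2, if_neg h4]; simp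

lemma h_univ (U : Finset (Fin 6)) : hIdef Finset.univ U = 0 := by
  unfold hIdef
  apply Finset.sum_eq_zero
  intro j hj
  rw [sum_dc]
  by_cases h1 : j = 1
  · subst h1
    rw [wc_zero' {0,3} _ _ 3 (by decide) (by decide)]; simp
  · by_cases h2 : j = 2
    · subst h2
      rw [wc_zero' {0,4} _ _ 4 (by decide) (by decide),
        wc_zero' {1,5} _ _ 1 (by decide) (by decide)]
      simp
    · by_cases h4 : j = 4
      · subst h4
        rw [wc_zero' {3,5} _ _ 3 (by decide) (by decide)]; simp [h1, h2]
      · rw [if_neg h1, if_neg h2, if_neg h4]; simp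

lemma h_i1234 (U : Finset (Fin 6)) : hIdef {1,2,3,4} U = 0 := by
  unfold hIdef
  apply Finset.sum_eq_zero
  intro j hj
  rw [sum_dc]
  by_cases h1 : j = 1
  · subst h1
    rw [wc_zero' {0,3} _ _ 3 (by decide) (by decide)]; simp
  · by_cases h2 : j = 2
    · subst h2
      rw [wc_zero' {0,4} _ _ 4 (by decide) (by decide),
        wc_zero' {1,5} _ _ 1 (by decide) (by decide)]
      simp
    · by_cases h4 : j = 4
      · subst h4
        rw [wc_zero' {3,5} _ _ 3 (by decide) (by decide)]; simp [h1, h2]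
      · rw [if_neg h1, if_neg h2, if_neg h4]; simp

lemma h_i134 (U : Finset (Fin 6)) : hIdef {1,3,4} U = 0 := by
  unfold hIdef
  apply Finset.sum_eq_zero
  intro j hj
  rw [sum_dc]
  by_cases h1 : j = 1
  · subst h1
    rw [wc_zero' {0,3} _ _ 3 (by decide) (by decide)]; simp
  · by_cases h2 : j = 2
    · subst h2
      rw [wc_zero' {0,4} _ _ 4 (by decide) (by decide),
        wc_zero' {1,5} _ _ 1 (by decide) (by decide)]
      simp
    · by_cases h4 : j = 4
      · subst h4
        rw [wc_zero' {3,5} _ _ 3 (by decide) (by decide)]; simp [h1, h2]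
      · rw [if_neg h1, if_neg h2, if_neg h4]; simp

lemma hv_234_1345 : hIdef {2,3,4} {1,3,4,5} = -1 := by
  unfold hIdef
  rw [Finset.sum_insert (by decide), Finset.sum_insert (by decide), Finset.sum_singleton]
  rw [sum_dc, sum_dc, sum_dc]
  simp (config := { decide := true }) [wedgeCoef, insSign]

lemma hv_234_0234 : hIdef {2,3,4} {0,2,3,4} = 0 := by
  unfold hIdef
  rw [Finset.sum_insert (by decide), Finset.sum_insert (by decide), Finset.sum_singleton]
  rw [sum_dc, sum_dc, sum_dc]
  simp (config := { decide := true }) [wedgeCoef, insSign]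

lemma hv_234_0134 : hIdef {2,3,4} {0,1,3,4} = 0 := by
  unfold hIdef
  rw [Finset.sum_insert (by decide), Finset.sum_insert (by decide), Finset.sum_singleton]
  rw [sum_dc, sum_dc, sum_dc]
  simp (config := { decide := true }) [wedgeCoef, insSign]

lemma hv_124_1345 : hIdef {1,2,4} {1,3,4,5} = 0 := by
  unfold hIdef
  rw [Finset.sum_insert (by decide), Finset.sum_insert (by decide), Finset.sum_singleton]
  rw [sum_dc, sum_dc, sum_dc]
  simp (config := { decide := true }) [wedgeCoef, insSign]

lemma hv_124_0234 : hIdef {1,2,4} {0,2,3,4} = 1 := by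
  unfold hIdef
  rw [Finset.sum_insert (by decide), Finset.sum_insert (by decide), Finset.sum_singleton]
  rw [sum_dc, sum_dc, sum_dc]
  simp (config := { decide := true }) [wedgeCoef, insSign]

lemma hv_124_0134 : hIdef {1,2,4} {0,1,3,4} = 0 := by
  unfold hIdef
  rw [Finset.sum_insert (by decide), Finset.sum_insert (by decide), Finset.sum_singleton]
  rw [sum_dc, sum_dc, sum_dc]
  simp (config := { decide := true }) [wedgeCoef, insSign]

lemma hv_123_1345 : hIdef {1,2,3} {1,3,4,5} = 0 := by
  unfold hIdef
  rw [Finset.sum_insert (by decide), Finset.sum_insert (by decide), Finset.sum_singleton]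
  rw [sum_dc, sum_dc, sum_dc]
  simp (config := { decide := true }) [wedgeCoef, insSign]

lemma hv_123_0234 : hIdef {1,2,3} {0,2,3,4} = 0 := by
  unfold hIdef
  rw [Finset.sum_insert (by decide), Finset.sum_insert (by decide), Finset.sum_singleton]
  rw [sum_dc, sum_dc, sum_dc]
  simp (config := { decide := true }) [wedgeCoef, insSign]

lemma hv_123_0134 : hIdef {1,2,3} {0,1,3,4} = 1 := by
  unfold hIdef
  rw [Finset.sum_insert (by decide), Finset.sum_insert (by decide), Finset.sum_singleton]
  rw [sum_dc, sum_dc, sum_dc]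
  simp (config := { decide := true }) [wedgeCoef, insSign]


lemma card5_eq (V : Finset (Fin 6)) (hV : V.card = 5) :
    ∃ i : Fin 6, V = Finset.univ.erase i := by
  have h1 : (Finset.univ \ V).card = 1 := by
    rw [Finset.card_sdiff_of_subset (Finset.subset_univ V), hV]
    simp
  obtain ⟨i, hi⟩ := Finset.card_eq_one.mp h1
  refine ⟨i, ?_⟩
  have h2 : Finset.univ \ (Finset.univ \ V) = V := by
    rw [Finset.sdiff_sdiff_self_left, Finset.univ_inter]
  rw [← h2, hi, Finset.sdiff_singleton_eq_erase]

lemma eq_of_insert05 (I : Finset (Fin 6)) (h0 : 0 ∉ I) (h5 : 5 ∉ I)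
    (V : Finset (Fin 6)) (hV : insert 0 (insert 5 I) = V) : I = V \ {0, 5} := by
  ext x
  simp only [Finset.mem_sdiff, Finset.mem_insert, Finset.mem_singleton, ← hV]
  constructor
  · intro hx
    exact ⟨Or.inr (Or.inr hx), by rintro (rfl | rfl); exacts [h0 hx, h5 hx]⟩
  · rintro ⟨(rfl | rfl | hx), hne⟩
    · exact absurd (Or.inl rfl) hne
    · exact absurd (Or.inr rfl) hne
    · exact hx

lemma delOp_eq_zero (f : Forms 6)
    (hf : ∀ st : Idx6, f st ≠ 0 → st.1.card = 5 ∨ st.1 = Finset.univ) :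
    delOp 6 i6DC f = 0 := by
  funext st
  obtain ⟨U, J⟩ := st
  rw [delOp_apply]
  show (∑ I : Finset (Fin 6), hIdef I U * f (I, J)) = 0
  apply Finset.sum_eq_zero
  intro I _
  by_cases hz : f (I, J) = 0
  · rw [hz, mul_zero]
  · rcases hf (I, J) hz with h | h <;> dsimp only at h
    · rw [h_card5 I h U, zero_mul]
    · rw [h, h_univ U, zero_mul]

lemma dbarOp_eq_zero (f : Forms 6)
    (hf : ∀ st : Idx6, f st ≠ 0 →
      st.2 = ∅ ∨ st.2 = {0} ∨ st.2 = {3} ∨ st.2 = {5}) :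
    dbarOp 6 i6DC f = 0 := by
  funext st
  obtain ⟨U, J⟩ := st
  rw [dbarOp_apply]
  apply Finset.sum_eq_zero
  intro Js _
  by_cases hz : f (U, Js) = 0
  · rw [hz, mul_zero]
  · rcases hf (U, Js) hz with h | h | h | h <;> subst h
    · simp
    · rw [Finset.sum_singleton, Finset.erase_singleton]
      have : ∀ S : Finset (Fin 6), i6DC 0 S = 0 := fun S =>
        i6DC_eq_zero _ _ ⟨fun h => absurd h.1 (by decide), fun h => absurd h.1 (by decide),
          fun h => absurd h.1 (by decide), fun h => absurd h.1 (by decide)⟩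
      simp [this]
    · rw [Finset.sum_singleton, Finset.erase_singleton]
      have : ∀ S : Finset (Fin 6), i6DC 3 S = 0 := fun S =>
        i6DC_eq_zero _ _ ⟨fun h => absurd h.1 (by decide), fun h => absurd h.1 (by decide),
          fun h => absurd h.1 (by decide), fun h => absurd h.1 (by decide)⟩
      simp [this]
    · rw [Finset.sum_singleton, Finset.erase_singleton]
      have : ∀ S : Finset (Fin 6), i6DC 5 S = 0 := fun S =>
        i6DC_eq_zero _ _ ⟨fun h => absurd h.1 (by decide), fun h => absurd h.1 (by decide),
          fun h => absurd h.1 (by decide), fun h => absurd h.1 (by decide)⟩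
      simp [this]

lemma delIota_eq_zero (f : Forms 6)
    (hf : ∀ st : Idx6, f st ≠ 0 →
      st.1 = Finset.univ ∨ st.1 = Finset.univ.erase 0 ∨ st.1 = Finset.univ.erase 2 ∨
        st.1 = Finset.univ.erase 5) :
    delOp 6 i6DC (iotaBiv 6 pi2 f) = 0 := by
  funext st
  obtain ⟨U, J⟩ := st
  rw [delOp_apply]
  show (∑ I : Finset (Fin 6), hIdef I U * iotaBiv 6 pi2 f (I, J)) = 0
  apply Finset.sum_eq_zero
  intro I _
  rw [iotaBiv_pi2_apply]
  by_cases hc : (0 : Fin 6) ∉ (I, J).1 ∧ (5 : Fin 6) ∉ (I, J).1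
  · rw [if_pos hc]
    by_cases hz : f (insert 0 (insert 5 (I, J).1), (I, J).2) = 0
    · rw [hz]; ring
    · rcases hf _ hz with h | h | h | h <;> dsimp only at h
      · have hI : I = ({1,2,3,4} : Finset (Fin 6)) := by
          rw [eq_of_insert05 I hc.1 hc.2 _ h]
          decide
        rw [hI, h_i1234, zero_mul]
      · exfalso
        have h0 : (0 : Fin 6) ∈ insert 0 (insert 5 (I, J).1) := Finset.mem_insert_self _ _
        rw [h] at h0
        exact absurd h0 (by decide)
      · have hI : I = ({1,3,4} : Finset (Fin 6)) := by
          rw [eq_of_insert05 I hc.1 hc.2 _ h]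
          decide
        rw [hI, h_i134, zero_mul]
      · exfalso
        have h5 : (5 : Fin 6) ∈ insert 0 (insert 5 (I, J).1) := by
          exact Finset.mem_insert_of_mem (Finset.mem_insert_self _ _)
        rw [h] at h5
        exact absurd h5 (by decide)
  · rw [if_neg hc, mul_zero]

lemma insSign_empty (j : Fin 6) : insSign 6 j ∅ = 1 := by
  unfold insSign
  rw [Finset.filter_empty, Finset.card_empty, pow_zero]

lemma dbar_eval_univ (f : Forms 6)
    (hf : ∀ Js : Finset (Fin 6), f (Finset.univ, Js) ≠ 0 → Js.card = 1)
    (J : Finset (Fin 6)) (j0 : Fin 6)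
    (hdc : ∀ j : Fin 6, j ≠ j0 → i6DC j J = 0) :
    dbarOp 6 i6DC f (Finset.univ, J) = i6DC j0 J * f (Finset.univ, {j0}) := by
  rw [dbarOp_apply]
  rw [Finset.sum_eq_single ({j0} : Finset (Fin 6))]
  · rw [Finset.sum_singleton, Finset.erase_singleton, insSign_empty]
    simp only [wc_empty, mul_ite, mul_one, mul_zero, Finset.sum_ite_eq', Finset.mem_univ,
      if_true]
    rw [show (Finset.univ : Finset (Fin 6)).card = 6 by decide]
    norm_num
  · intro Js _ hJs
    by_cases hz : f (Finset.univ, Js) = 0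
    · rw [hz, mul_zero]
    · obtain ⟨j, rfl⟩ := Finset.card_eq_one.mp (hf Js hz)
      have hj : j ≠ j0 := fun h => hJs (by rw [h])
      rw [Finset.sum_singleton, Finset.erase_singleton, insSign_empty]
      simp only [wc_empty, mul_ite, mul_one, mul_zero, Finset.sum_ite_eq', Finset.mem_univ,
        if_true]
      rw [hdc j hj]
      ring
  · intro h; exact absurd (Finset.mem_univ _) h

lemma dbar_zero_c4 (f : Forms 6)
    (hf : ∀ st : Idx6, f st ≠ 0 → (6 : ℤ) - st.1.card + st.2.card = 1)
    (U : Finset (Fin 6)) (hU : U.card = 4) (J : Finset (Fin 6)) :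
    dbarOp 6 i6DC f (U, J) = 0 := by
  rw [dbarOp_apply]
  apply Finset.sum_eq_zero
  intro Js _
  by_cases hz : f (U, Js) = 0
  · rw [hz, mul_zero]
  · have := hf (U, Js) hz
    dsimp only at this
    rw [hU] at this
    have hle : (0 : ℤ) ≤ (Js.card : ℤ) := Int.natCast_nonneg _
    omega

lemma delIota_zero_J2 (f : Forms 6)
    (hf : ∀ st : Idx6, f st ≠ 0 → (6 : ℤ) - st.1.card + st.2.card = 1)
    (U J : Finset (Fin 6)) (hJ : J.card = 2) :
    delOp 6 i6DC (iotaBiv 6 pi2 f) (U, J) = 0 := by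
  rw [delOp_apply]
  show (∑ I : Finset (Fin 6), hIdef I U * iotaBiv 6 pi2 f (I, J)) = 0
  apply Finset.sum_eq_zero
  intro I _
  rw [iotaBiv_pi2_apply]
  by_cases hc : (0 : Fin 6) ∉ (I, J).1 ∧ (5 : Fin 6) ∉ (I, J).1
  · rw [if_pos hc]
    by_cases hz : f (insert 0 (insert 5 (I, J).1), (I, J).2) = 0
    · rw [hz]; ring
    · exfalso
      have := hf _ hz
      dsimp only at this
      rw [hJ] at this
      have hle : (insert 0 (insert 5 I)).card ≤ 6 := by
        simpa using Finset.card_le_univ (insert 0 (insert 5 I))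
      omega
  · rw [if_neg hc, mul_zero]

lemma delIota_eval (f : Forms 6)
    (hf : ∀ st : Idx6, f st ≠ 0 → (6 : ℤ) - st.1.card + st.2.card = 1)
    (U : Finset (Fin 6)) (i0 : Fin 6)
    (hins : insert 0 (insert 5 (({1,2,3,4} : Finset (Fin 6)).erase i0)) =
      Finset.univ.erase i0)
    (hv0 : ∀ i : Fin 6, i ∈ ({1,2,3,4} : Finset (Fin 6)) → i ≠ i0 →
      hIdef (({1,2,3,4} : Finset (Fin 6)).erase i) U = 0) :
    delOp 6 i6DC (iotaBiv 6 pi2 f) (U, ∅) =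
      hIdef (({1,2,3,4} : Finset (Fin 6)).erase i0) U *
        (-insSign 6 5 (({1,2,3,4} : Finset (Fin 6)).erase i0) *
          f (Finset.univ.erase i0, ∅)) := by
  rw [delOp_apply]
  show (∑ I : Finset (Fin 6), hIdef I U * iotaBiv 6 pi2 f (I, ∅)) = _
  rw [Finset.sum_eq_single (({1,2,3,4} : Finset (Fin 6)).erase i0)]
  · rw [iotaBiv_pi2_apply]
    dsimp only
    rw [if_pos ⟨by
        intro hm
        exact absurd (Finset.mem_erase.mp hm).2 (by decide), by
        intro hm
        exact absurd (Finset.mem_erase.mp hm).2 (by decide)⟩]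
    rw [hins]
  · intro I _ hne
    rw [iotaBiv_pi2_apply]
    dsimp only
    by_cases hc : (0 : Fin 6) ∉ I ∧ (5 : Fin 6) ∉ I
    · rw [if_pos hc]
      by_cases hz : f (insert 0 (insert 5 I), ∅) = 0
      · rw [hz]; ring
      · have hcard := hf _ hz
        dsimp only at hcard
        rw [Finset.card_empty] at hcard
        have hc5 : (insert 0 (insert 5 I)).card = 5 := by omega
        obtain ⟨i, hVi⟩ := card5_eq _ hc5
        have hI : I = (Finset.univ.erase i) \ {0, 5} := eq_of_insert05 I hc.1 hc.2 _ hVi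
        have hi0' : (0 : Fin 6) ∈ Finset.univ.erase i := by
          rw [← hVi]; exact Finset.mem_insert_self _ _
        have hi5' : (5 : Fin 6) ∈ Finset.univ.erase i := by
          rw [← hVi]; exact Finset.mem_insert_of_mem (Finset.mem_insert_self _ _)
        have hi0 : i ≠ 0 := fun h => by
          rw [h] at hi0'; exact absurd hi0' (by decide)
        have hi5 : i ≠ 5 := fun h => by
          rw [h] at hi5'; exact absurd hi5' (by decide)
        have hi14 : i ∈ ({1,2,3,4} : Finset (Fin 6)) :=
          (show ∀ k : Fin 6, k ≠ 0 → k ≠ 5 → k ∈ ({1,2,3,4} : Finset (Fin 6)) from by decide)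
            i hi0 hi5
        have hI' : I = ({1,2,3,4} : Finset (Fin 6)).erase i :=
          hI.trans ((show ∀ k : Fin 6, (Finset.univ.erase k \ {0, 5} : Finset (Fin 6)) =
            ({1,2,3,4} : Finset (Fin 6)).erase k from by decide) i)
        by_cases hii : i = i0
        · exact absurd (hI'.trans (by rw [hii])) hne
        · rw [hI', hv0 i hi14 hii, zero_mul]
    · rw [if_neg hc, mul_zero]
  · intro h; exact absurd (Finset.mem_univ _) h

lemma mem_totalGrade {k : ℤ} {f : Forms 6} :
    f ∈ totalGrade 6 k ↔ ∀ st : Idx6, f st ≠ 0 → (6 : ℤ) - st.1.card + st.2.card = k :=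
  Iff.rfl

lemma mem_grade {p q : ℤ} {f : Forms 6} :
    f ∈ grade 6 p q ↔ ∀ st : Idx6, f st ≠ 0 → (st.1.card : ℤ) = p ∧ (st.2.card : ℤ) = q :=
  Iff.rfl

/-- The Koszul–Brylinski total differential of `(𝕀₆, π₂)`. -/
noncomputable abbrev Dop : Forms 6 →ₗ[ℂ] Forms 6 := kbOp 6 i6DC pi2 + dbarOp 6 i6DC

lemma card_le_six (s : Finset (Fin 6)) : s.card ≤ 6 := by
  simpa using Finset.card_le_univ s

lemma eq_univ_of_card_six (s : Finset (Fin 6)) (h : s.card = 6) : s = Finset.univ :=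
  (Finset.card_eq_iff_eq_univ s).mp (by simpa using h)

/-- Support in the four admissible index rows kills `Dop`. -/
lemma Dop_eq_zero (f : Forms 6)
    (h1 : ∀ st : Idx6, f st ≠ 0 → st.1.card = 5 ∨ st.1 = Finset.univ)
    (h2 : ∀ st : Idx6, f st ≠ 0 → st.2 = ∅ ∨ st.2 = {0} ∨ st.2 = {3} ∨ st.2 = {5})
    (h3 : ∀ st : Idx6, f st ≠ 0 →
      st.1 = Finset.univ ∨ st.1 = Finset.univ.erase 0 ∨ st.1 = Finset.univ.erase 2 ∨
        st.1 = Finset.univ.erase 5) :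
    Dop f = 0 := by
  rw [LinearMap.add_apply, kbOp_apply, delOp_eq_zero f h1, dbarOp_eq_zero f h2,
    delIota_eq_zero f h3, map_zero]
  simp

lemma tg0_le_ker : totalGrade 6 0 ≤ LinearMap.ker Dop := by
  intro f hf
  rw [mem_totalGrade] at hf
  have hsup : ∀ st : Idx6, f st ≠ 0 → st.1 = Finset.univ ∧ st.2 = ∅ := by
    intro st h
    have heq := hf st h
    have hc1 := card_le_six st.1
    refine ⟨eq_univ_of_card_six _ (by omega), Finset.card_eq_zero.mp (by omega)⟩
  rw [LinearMap.mem_ker]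
  exact Dop_eq_zero f (fun st h => Or.inr (hsup st h).1)
    (fun st h => Or.inl (hsup st h).2) (fun st h => Or.inl (hsup st h).1)

/-- The predicate cutting out `ker Dop ∩ totalGrade 1`. -/
def Q6 : Idx6 → Prop := fun st =>
  (st.2 = ∅ ∧ (st.1 = Finset.univ.erase 0 ∨ st.1 = Finset.univ.erase 2 ∨
    st.1 = Finset.univ.erase 5)) ∨
  (st.1 = Finset.univ ∧ (st.2 = {0} ∨ st.2 = {3} ∨ st.2 = {5}))

instance : DecidablePred Q6 := fun st => by unfold Q6; infer_instance

/-- The predicate cutting out `ker ∂̄ ∩ grade (6,1)`. -/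
def Q3 : Idx6 → Prop := fun st =>
  st.1 = Finset.univ ∧ (st.2 = {0} ∨ st.2 = {3} ∨ st.2 = {5})

instance : DecidablePred Q3 := fun st => by unfold Q3; infer_instance

lemma Q6_le_ker : subP Q6 ≤ LinearMap.ker Dop := by
  intro f hf
  rw [mem_subP] at hf
  rw [LinearMap.mem_ker]
  refine Dop_eq_zero f ?_ ?_ ?_
  · intro st h
    rcases hf st h with ⟨-, h1 | h1 | h1⟩ | ⟨h1, -⟩ <;> rw [h1]
    · left; decide
    · left; decide
    · left; decide
    · right; rfl
  · intro st h
    rcases hf st h with ⟨h2, -⟩ | ⟨-, h2⟩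
    · exact Or.inl h2
    · exact Or.inr h2
  · intro st h
    rcases hf st h with ⟨-, h1 | h1 | h1⟩ | ⟨h1, -⟩
    · exact Or.inr (Or.inl h1)
    · exact Or.inr (Or.inr (Or.inl h1))
    · exact Or.inr (Or.inr (Or.inr h1))
    · exact Or.inl h1

lemma Q3_le_ker : subP Q3 ≤ LinearMap.ker (dbarOp 6 i6DC) := by
  intro f hf
  rw [mem_subP] at hf
  rw [LinearMap.mem_ker]
  exact dbarOp_eq_zero f (fun st h => Or.inr (hf st h).2)

lemma g50_le_ker : grade 6 5 0 ≤ LinearMap.ker (dbarOp 6 i6DC) := by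
  intro f hf
  rw [mem_grade] at hf
  rw [LinearMap.mem_ker]
  exact dbarOp_eq_zero f (fun st h =>
    Or.inl (Finset.card_eq_zero.mp (by have := (hf st h).2; omega)))

lemma g60_le_ker : grade 6 6 0 ≤ LinearMap.ker (dbarOp 6 i6DC) := by
  intro f hf
  rw [mem_grade] at hf
  rw [LinearMap.mem_ker]
  exact dbarOp_eq_zero f (fun st h =>
    Or.inl (Finset.card_eq_zero.mp (by have := (hf st h).2; omega)))

lemma insSign_234 : insSign 6 5 ({2,3,4} : Finset (Fin 6)) = -1 := by
  unfold insSign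
  rw [show ((({2,3,4} : Finset (Fin 6))).filter fun a => a < 5).card = 3 from by decide]
  norm_num

lemma insSign_124 : insSign 6 5 ({1,2,4} : Finset (Fin 6)) = -1 := by
  unfold insSign
  rw [show ((({1,2,4} : Finset (Fin 6))).filter fun a => a < 5).card = 3 from by decide]
  norm_num

lemma insSign_123 : insSign 6 5 ({1,2,3} : Finset (Fin 6)) = -1 := by
  unfold insSign
  rw [show ((({1,2,3} : Finset (Fin 6))).filter fun a => a < 5).card = 3 from by decide]
  norm_num

lemma tg1_card (f : Forms 6) (hf : f ∈ totalGrade 6 1) :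
    ∀ st : Idx6, f st ≠ 0 → st.1.card = 5 ∨ st.1 = Finset.univ := by
  intro st h
  have heq := mem_totalGrade.mp hf st h
  have hc1 := card_le_six st.1
  by_cases h5 : st.1.card = 5
  · exact Or.inl h5
  · exact Or.inr (eq_univ_of_card_six _ (by omega))

lemma tg1_univ_card (f : Forms 6) (hf : f ∈ totalGrade 6 1) :
    ∀ Js : Finset (Fin 6), f (Finset.univ, Js) ≠ 0 → Js.card = 1 := by
  intro Js h
  have heq := mem_totalGrade.mp hf _ h
  dsimp only at heq
  rw [show (Finset.univ : Finset (Fin 6)).card = 6 from by decide] at heq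
  omega

/-- Evaluation of `Dop f` at a point, given that `∂f = 0`. -/
lemma Dop_point (f : Forms 6) (hdel : delOp 6 i6DC f = 0) (st : Idx6) :
    Dop f st = -(delOp 6 i6DC (iotaBiv 6 pi2 f) st) + dbarOp 6 i6DC f st := by
  rw [LinearMap.add_apply, kbOp_apply, hdel, map_zero]
  show ((0 : Forms 6) - _) st + _ = _
  rw [Pi.sub_apply, Pi.zero_apply]
  ring

lemma tg1_inf : totalGrade 6 1 ⊓ LinearMap.ker Dop = subP Q6 := by
  apply le_antisymm
  · rintro f ⟨hf1, hfk⟩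
    replace hfk := LinearMap.mem_ker.mp hfk
    have hdel : delOp 6 i6DC f = 0 := delOp_eq_zero f (tg1_card f hf1)
    have hJ1 := tg1_univ_card f hf1
    have hsup := mem_totalGrade.mp hf1
    -- the six vanishing coordinates
    have hz1 : f (Finset.univ.erase 1, ∅) = 0 := by
      have h0 : Dop f ({1,3,4,5}, ∅) = 0 := by rw [hfk]; rfl
      rw [Dop_point f hdel, dbar_zero_c4 f hsup _ (by decide) _,
        delIota_eval f hsup _ 1 (by decide) ?_] at h0
      · rw [show (({1,2,3,4} : Finset (Fin 6)).erase 1) = {2,3,4} from by decide,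
          hv_234_1345, insSign_234] at h0
        field_simp at h0
        simpa using h0
      · intro i hi hne
        fin_cases hi
        · exact absurd rfl hne
        · rw [show (({1,2,3,4} : Finset (Fin 6)).erase 2) = {1,3,4} from by decide]
          exact h_i134 _
        · rw [show (({1,2,3,4} : Finset (Fin 6)).erase 3) = {1,2,4} from by decide]
          exact hv_124_1345
        · rw [show (({1,2,3,4} : Finset (Fin 6)).erase 4) = {1,2,3} from by decide]
          exact hv_123_1345
    have hz3 : f (Finset.univ.erase 3, ∅) = 0 := by
      have h0 : Dop f ({0,2,3,4}, ∅) = 0 := by rw [hfk]; rfl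
      rw [Dop_point f hdel, dbar_zero_c4 f hsup _ (by decide) _,
        delIota_eval f hsup _ 3 (by decide) ?_] at h0
      · rw [show (({1,2,3,4} : Finset (Fin 6)).erase 3) = {1,2,4} from by decide,
          hv_124_0234, insSign_124] at h0
        field_simp at h0
        simpa using h0
      · intro i hi hne
        fin_cases hi
        · rw [show (({1,2,3,4} : Finset (Fin 6)).erase 1) = {2,3,4} from by decide]
          exact hv_234_0234
        · rw [show (({1,2,3,4} : Finset (Fin 6)).erase 2) = {1,3,4} from by decide]
          exact h_i134 _
        · exact absurd rfl hne
        · rw [show (({1,2,3,4} : Finset (Fin 6)).erase 4) = {1,2,3} from by decide]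
          exact hv_123_0234
    have hz4 : f (Finset.univ.erase 4, ∅) = 0 := by
      have h0 : Dop f ({0,1,3,4}, ∅) = 0 := by rw [hfk]; rfl
      rw [Dop_point f hdel, dbar_zero_c4 f hsup _ (by decide) _,
        delIota_eval f hsup _ 4 (by decide) ?_] at h0
      · rw [show (({1,2,3,4} : Finset (Fin 6)).erase 4) = {1,2,3} from by decide,
          hv_123_0134, insSign_123] at h0
        field_simp at h0
        simpa using h0
      · intro i hi hne
        fin_cases hi
        · rw [show (({1,2,3,4} : Finset (Fin 6)).erase 1) = {2,3,4} from by decide]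
          exact hv_234_0134
        · rw [show (({1,2,3,4} : Finset (Fin 6)).erase 2) = {1,3,4} from by decide]
          exact h_i134 _
        · rw [show (({1,2,3,4} : Finset (Fin 6)).erase 3) = {1,2,4} from by decide]
          exact hv_124_0134
        · exact absurd rfl hne
    have hw1 : f (Finset.univ, {1}) = 0 := by
      have h0 : Dop f (Finset.univ, {0,3}) = 0 := by rw [hfk]; rfl
      rw [Dop_point f hdel, delIota_zero_J2 f hsup _ _ (by decide),
        dbar_eval_univ f hJ1 _ 1 ?_] at h0
      · rw [show i6DC 1 {0,3} = -1 from rfl] at h0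
        field_simp at h0
        simpa using h0
      · intro j hj
        exact i6DC_eq_zero _ _ ⟨fun h => hj h.1, fun h => absurd h.2 (by decide),
          fun h => absurd h.2 (by decide), fun h => absurd h.2 (by decide)⟩
    have hw2 : f (Finset.univ, {2}) = 0 := by
      have h0 : Dop f (Finset.univ, {0,4}) = 0 := by rw [hfk]; rfl
      rw [Dop_point f hdel, delIota_zero_J2 f hsup _ _ (by decide),
        dbar_eval_univ f hJ1 _ 2 ?_] at h0
      · rw [show i6DC 2 {0,4} = -1 from rfl] at h0
        field_simp at h0
        simpa using h0
      · intro j hj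
        exact i6DC_eq_zero _ _ ⟨fun h => absurd h.2 (by decide), fun h => hj h.1,
          fun h => absurd h.2 (by decide), fun h => absurd h.2 (by decide)⟩
    have hw4 : f (Finset.univ, {4}) = 0 := by
      have h0 : Dop f (Finset.univ, {3,5}) = 0 := by rw [hfk]; rfl
      rw [Dop_point f hdel, delIota_zero_J2 f hsup _ _ (by decide),
        dbar_eval_univ f hJ1 _ 4 ?_] at h0
      · rw [show i6DC 4 {3,5} = -1 from rfl] at h0
        field_simp at h0
        simpa using h0
      · intro j hj
        exact i6DC_eq_zero _ _ ⟨fun h => absurd h.2 (by decide), fun h => absurd h.2 (by decide),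
          fun h => absurd h.2 (by decide), fun h => hj h.1⟩
    -- conclude support
    show f ∈ subP Q6
    rw [mem_subP]
    intro st hst
    have heq := hsup st hst
    have hc1 := card_le_six st.1
    by_cases h5 : st.1.card = 5
    · have hc2 : st.2.card = 0 := by omega
      have h2 : st.2 = ∅ := Finset.card_eq_zero.mp hc2
      obtain ⟨i, hi⟩ := card5_eq _ h5
      have hstp : st = (Finset.univ.erase i, ∅) := Prod.ext hi h2
      unfold Q6
      fin_cases i
      · exact Or.inl ⟨h2, Or.inl hi⟩
      · rw [hstp] at hst; exact absurd hz1 hst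
      · exact Or.inl ⟨h2, Or.inr (Or.inl hi)⟩
      · rw [hstp] at hst; exact absurd hz3 hst
      · rw [hstp] at hst; exact absurd hz4 hst
      · exact Or.inl ⟨h2, Or.inr (Or.inr hi)⟩
    · have hc6 : st.1.card = 6 := by omega
      have h1 : st.1 = Finset.univ := eq_univ_of_card_six _ hc6
      have hc2 : st.2.card = 1 := by omega
      obtain ⟨j, hj⟩ := Finset.card_eq_one.mp hc2
      have hstp : st = (Finset.univ, {j}) := Prod.ext h1 hj
      unfold Q6
      fin_cases j
      · exact Or.inr ⟨h1, Or.inl hj⟩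
      · rw [hstp] at hst; exact absurd hw1 hst
      · rw [hstp] at hst; exact absurd hw2 hst
      · exact Or.inr ⟨h1, Or.inr (Or.inl hj)⟩
      · rw [hstp] at hst; exact absurd hw4 hst
      · exact Or.inr ⟨h1, Or.inr (Or.inr hj)⟩
  · intro f hf
    refine ⟨?_, Q6_le_ker hf⟩
    rw [mem_subP] at hf
    show f ∈ totalGrade 6 1
    rw [mem_totalGrade]
    intro st h
    rcases hf st h with ⟨h2, h1 | h1 | h1⟩ | ⟨h1, h2 | h2 | h2⟩ <;> rw [h1, h2] <;> decide

lemma g61_inf : grade 6 6 1 ⊓ LinearMap.ker (dbarOp 6 i6DC) = subP Q3 := by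
  apply le_antisymm
  · rintro f ⟨hf1, hfk⟩
    replace hfk := LinearMap.mem_ker.mp hfk
    have hJ1 : ∀ Js : Finset (Fin 6), f (Finset.univ, Js) ≠ 0 → Js.card = 1 := by
      intro Js h
      have := (mem_grade.mp hf1 _ h).2
      dsimp only at this
      omega
    have hw1 : f (Finset.univ, {1}) = 0 := by
      have h0 : dbarOp 6 i6DC f (Finset.univ, {0,3}) = 0 := by rw [hfk]; rfl
      rw [dbar_eval_univ f hJ1 _ 1 ?_] at h0
      · rw [show i6DC 1 {0,3} = -1 from rfl] at h0
        field_simp at h0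
        simpa using h0
      · intro j hj
        exact i6DC_eq_zero _ _ ⟨fun h => hj h.1, fun h => absurd h.2 (by decide),
          fun h => absurd h.2 (by decide), fun h => absurd h.2 (by decide)⟩
    have hw2 : f (Finset.univ, {2}) = 0 := by
      have h0 : dbarOp 6 i6DC f (Finset.univ, {0,4}) = 0 := by rw [hfk]; rfl
      rw [dbar_eval_univ f hJ1 _ 2 ?_] at h0
      · rw [show i6DC 2 {0,4} = -1 from rfl] at h0
        field_simp at h0
        simpa using h0
      · intro j hj
        exact i6DC_eq_zero _ _ ⟨fun h => absurd h.2 (by decide), fun h => hj h.1,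
          fun h => absurd h.2 (by decide), fun h => absurd h.2 (by decide)⟩
    have hw4 : f (Finset.univ, {4}) = 0 := by
      have h0 : dbarOp 6 i6DC f (Finset.univ, {3,5}) = 0 := by rw [hfk]; rfl
      rw [dbar_eval_univ f hJ1 _ 4 ?_] at h0
      · rw [show i6DC 4 {3,5} = -1 from rfl] at h0
        field_simp at h0
        simpa using h0
      · intro j hj
        exact i6DC_eq_zero _ _ ⟨fun h => absurd h.2 (by decide), fun h => absurd h.2 (by decide),
          fun h => absurd h.2 (by decide), fun h => hj h.1⟩
    show f ∈ subP Q3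
    rw [mem_subP]
    intro st hst
    obtain ⟨hc1, hc2⟩ := mem_grade.mp hf1 st hst
    have h1 : st.1 = Finset.univ := eq_univ_of_card_six _ (by omega)
    obtain ⟨j, hj⟩ := Finset.card_eq_one.mp (show st.2.card = 1 by omega)
    have hstp : st = (Finset.univ, {j}) := Prod.ext h1 hj
    unfold Q3
    fin_cases j
    · exact ⟨h1, Or.inl hj⟩
    · rw [hstp] at hst; exact absurd hw1 hst
    · rw [hstp] at hst; exact absurd hw2 hst
    · exact ⟨h1, Or.inr (Or.inl hj)⟩
    · rw [hstp] at hst; exact absurd hw4 hst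
    · exact ⟨h1, Or.inr (Or.inr hj)⟩
  · intro f hf
    refine ⟨?_, Q3_le_ker hf⟩
    rw [mem_subP] at hf
    show f ∈ grade 6 6 1
    rw [mem_grade]
    intro st h
    rcases hf st h with ⟨h1, h2 | h2 | h2⟩ <;> rw [h1, h2] <;> decide


lemma tgm1_eq_bot : totalGrade 6 (-1 : ℤ) = ⊥ := by
  rw [totalGrade_eq]
  apply subP_eq_bot
  intro st h
  have h1 := card_le_six st.1
  have h2 : (0 : ℤ) ≤ (st.2.card : ℤ) := Int.natCast_nonneg _
  omega

set_option maxRecDepth 100000 in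
lemma totCoh0 : totCohDim 6 Dop 0 = 1 := by
  unfold totCohDim
  rw [quot_dim _ _ _ (by
    rw [show (0 : ℤ) - 1 = -1 by norm_num, tgm1_eq_bot]
    exact bot_le)]
  rw [inf_eq_left.mpr tg0_le_ker, totalGrade_eq, finrank_subP]
  decide

set_option maxRecDepth 100000 in
lemma totCoh1 : totCohDim 6 Dop 1 = 6 := by
  unfold totCohDim
  rw [quot_dim _ _ _ (by
    rw [show (1 : ℤ) - 1 = 0 by norm_num]
    exact tg0_le_ker)]
  rw [tg1_inf, finrank_subP]
  decide

set_option maxRecDepth 100000 in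
lemma hodge50 : hodgeDim 6 i6DC 5 0 = 6 := by
  unfold hodgeDim
  rw [quot_dim _ _ _ (by
    rw [show grade 6 5 (0 - 1) = ⊥ by
      rw [grade_eq]
      apply subP_eq_bot
      intro st h
      have h2 : (0 : ℤ) ≤ (st.2.card : ℤ) := Int.natCast_nonneg _
      omega]
    exact bot_le)]
  rw [inf_eq_left.mpr g50_le_ker, grade_eq, finrank_subP]
  decide

set_option maxRecDepth 100000 in
lemma hodge61 : hodgeDim 6 i6DC 6 1 = 3 := by
  unfold hodgeDim
  rw [quot_dim _ _ _ (by
    rw [show (1 : ℤ) - 1 = 0 by norm_num]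
    exact g60_le_ker)]
  rw [g61_inf, finrank_subP]
  decide

lemma hodge_ge7 (p q : ℤ) (hp : 7 ≤ p) : hodgeDim 6 i6DC p q = 0 := by
  unfold hodgeDim
  have hg : grade 6 p q = ⊥ := by
    rw [grade_eq]
    apply subP_eq_bot
    intro st h
    have h1 := card_le_six st.1
    have := h.1
    omega
  haveI hss : Subsingleton (↥(grade 6 p q ⊓ LinearMap.ker (dbarOp 6 i6DC))) := by
    rw [hg, bot_inf_eq]
    infer_instance
  haveI : Subsingleton
      (↥(grade 6 p q ⊓ LinearMap.ker (dbarOp 6 i6DC)) ⧸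
        Submodule.comap (grade 6 p q ⊓ LinearMap.ker (dbarOp 6 i6DC)).subtype
          (Submodule.map (dbarOp 6 i6DC) (grade 6 p (q - 1)))) :=
    (Submodule.Quotient.mk_surjective _).subsingleton
  exact Module.finrank_zero_of_subsingleton

lemma not_e1 : ¬ e1Degenerates 6 i6DC pi2 := by
  intro h
  have h1 := h 1 (by norm_num) (by norm_num)
  rw [show totCohDim 6 (kbOp 6 i6DC pi2 + dbarOp 6 i6DC) 1 = 6 from totCoh1] at h1
  rw [Finset.sum_range_succ, Finset.sum_range_succ, Finset.sum_range_succ,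
    Finset.sum_range_succ, Finset.sum_range_succ, Finset.sum_range_succ,
    Finset.sum_range_succ, Finset.sum_range_zero] at h1
  norm_num at h1
  rw [hodge50, hodge61, hodge_ge7 7 2 (by norm_num), hodge_ge7 8 3 (by norm_num),
    hodge_ge7 9 4 (by norm_num), hodge_ge7 10 5 (by norm_num),
    hodge_ge7 11 6 (by norm_num)] at h1
  norm_num at h1

lemma tri_zero (b d x y z : Fin 6) : tri 6 (fun _ => 0) b d x y z = 0 := by
  unfold tri
  rw [Matrix.det_fin_three]
  simp

lemma br00 : i6Bracket 0 0 = fun _ => 0 := by funext i; simp [i6Bracket]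
lemma br05 : i6Bracket 0 5 = fun _ => 0 := by funext i; simp [i6Bracket]
lemma br50 : i6Bracket 5 0 = fun _ => 0 := by funext i; simp [i6Bracket]
lemma br55 : i6Bracket 5 5 = fun _ => 0 := by funext i; simp [i6Bracket]

lemma pi2_cases (a b : Fin 6) (h : pi2 a b ≠ 0) :
    (a = 0 ∧ b = 5) ∨ (a = 5 ∧ b = 0) := by
  by_contra hc
  push_neg at hc
  apply h
  unfold pi2
  rw [if_neg, if_neg]
  · intro hx
    exact (hc.2 hx.1) hx.2
  · intro hx
    exact (hc.1 hx.1) hx.2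

lemma schouten_pi2 (x y z : Fin 6) : schouten 6 i6Bracket pi2 pi2 x y z = 0 := by
  unfold schouten
  rw [Finset.sum_eq_zero, mul_zero]
  intro a _
  rw [Finset.sum_eq_zero]
  intro b _
  rw [Finset.sum_eq_zero]
  intro c _
  rw [Finset.sum_eq_zero]
  intro d _
  by_cases ha : pi2 a b = 0
  · rw [ha, zero_mul, zero_mul]
  by_cases hc : pi2 c d = 0
  · rw [hc, mul_zero, zero_mul]
  rcases pi2_cases a b ha with ⟨rfl, rfl⟩ | ⟨rfl, rfl⟩ <;>
    rcases pi2_cases c d hc with ⟨rfl, rfl⟩ | ⟨rfl, rfl⟩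
  · rw [br00, br05, br50, br55, tri_zero, tri_zero, tri_zero, tri_zero]; ring
  · rw [br00, br05, br50, br55, tri_zero, tri_zero, tri_zero, tri_zero]; ring
  · rw [br00, br05, br50, br55, tri_zero, tri_zero, tri_zero, tri_zero]; ring
  · rw [br00, br05, br50, br55, tri_zero, tri_zero, tri_zero, tri_zero]; ring


/-- **`E₁`-non-degeneracy for `(𝕀₆, π₂)`** (Section 6.3.2): `π₂ = X₁ ∧ X₆` is a
holomorphic Poisson structure on `𝕀₆` (`[π₂, π₂]_S = 0`) with
`H₀(𝕀₆, π₂) ≅ ℂ` and `H₁(𝕀₆, π₂) ≅ ℂ⁶`, whereas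
`dim H_∂̄^{5,0}(𝕀₆) + dim H_∂̄^{6,1}(𝕀₆) = 6 + 3 = 9`; consequently the
Dolbeault–Koszul–Brylinski spectral sequence of `(𝕀₆, π₂)` does not degenerate at
the `E₁`-page. -/
theorem i6_pi2_not_e1_degenerate :
    (∀ x y z : Fin 6, schouten 6 i6Bracket pi2 pi2 x y z = 0) ∧
    totCohDim 6 (kbOp 6 i6DC pi2 + dbarOp 6 i6DC) 0 = 1 ∧
    totCohDim 6 (kbOp 6 i6DC pi2 + dbarOp 6 i6DC) 1 = 6 ∧
    hodgeDim 6 i6DC 5 0 = 6 ∧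
    hodgeDim 6 i6DC 6 1 = 3 ∧
    ¬ e1Degenerates 6 i6DC pi2 := by
  exact ⟨schouten_pi2, totCoh0, totCoh1, hodge50, hodge61, not_e1⟩

end InvForms
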